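/- Let G be a minimally non-(3,4)-colorable graph with girth at least 5, and let C = u_1 u_2 u_3 u_4 u_5 u_6 be a 6-cycle in G such that none of the vertices u_1, ..., u_6 has degree 2. Then no vertex of C has exactly one 3^+-neighbor, and at most four of the vertices u_1, ..., u_6 are 5s-vertices. -/

import Mathlib

/-- The degree of a vertex: the number of its neighbors. -/
noncomputable def degN {V : Type*} (G : SimpleGraph V) (v : V) : ℕ :=
  {w | G.Adj v w}.ncard

/-- `c` is a (3,4)-coloring of `G`: every vertex gets value 3 or 4, and every
vertex with value `i` has at most `i` neighbors with value `i`. -/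
def IsColoring34 {V : Type*} (G : SimpleGraph V) (c : V → ℕ) : Prop :=
  (∀ v, c v = 3 ∨ c v = 4) ∧ ∀ v, {w | G.Adj v w ∧ c w = c v}.ncard ≤ c v

/-- `G` is (3,4)-colorable. -/
def Colorable34 {V : Type*} (G : SimpleGraph V) : Prop :=
  ∃ c, IsColoring34 G c

/-- The graph `G − v` obtained by deleting the vertex `v` and its incident edges
(keeping `v` as an isolated vertex, which does not affect (3,4)-colorability). -/
def deleteVert {V : Type*} (G : SimpleGraph V) (v : V) : SimpleGraph V where
  Adj a b := G.Adj a b ∧ a ≠ v ∧ b ≠ v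
  symm := ⟨fun _ _ ⟨h, ha, hb⟩ => ⟨h.symm, hb, ha⟩⟩
  loopless := ⟨fun a ⟨h, _, _⟩ => G.loopless.irrefl a h⟩

/-- `G` is minimally non-(3,4)-colorable. -/
def MinNonColorable34 {V : Type*} (G : SimpleGraph V) : Prop :=
  ¬ Colorable34 G ∧ (∀ v, Colorable34 (deleteVert G v)) ∧
    ∀ e ∈ G.edgeSet, Colorable34 (G.deleteEdges {e})

/-- `u` is `i`-saturated under the coloring `c` of the graph `G`. -/
def Saturated34 {V : Type*} (G : SimpleGraph V) (c : V → ℕ) (i : ℕ) (u : V) : Prop :=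
  c u = i ∧ {w | G.Adj u w ∧ c w = i}.ncard = i

/-- `u` can be recolored: changing the color of `u` to the other color
(`7 - c u` swaps 3 and 4) again yields a (3,4)-coloring of `G`. -/
def Recolorable34 {V : Type*} [DecidableEq V] (G : SimpleGraph V) (c : V → ℕ) (u : V) : Prop :=
  IsColoring34 G (Function.update c u (7 - c u))

/-- The number of 3^+-neighbors of `x` in `G` (neighbors of degree at least 3). -/
noncomputable def tpn {V : Type*} (G : SimpleGraph V) (x : V) : ℕ :=
  {w | G.Adj x w ∧ 3 ≤ degN G w}.ncard

/-- A 5p-vertex (poor 5-vertex): degree 5 with exactly one 3^+-neighbor. -/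
def Is5p {V : Type*} (G : SimpleGraph V) (x : V) : Prop := degN G x = 5 ∧ tpn G x = 1

/-- A 5s-vertex (semi-poor 5-vertex): degree 5 with exactly two 3^+-neighbors. -/
def Is5s {V : Type*} (G : SimpleGraph V) (x : V) : Prop := degN G x = 5 ∧ tpn G x = 2

/-- A 6p-vertex (poor 6-vertex): degree 6 with exactly one 3^+-neighbor. -/
def Is6p {V : Type*} (G : SimpleGraph V) (x : V) : Prop := degN G x = 6 ∧ tpn G x = 1

/-- `G` has girth at least 5: no 3-cycles and no 4-cycles. -/
def GirthAtLeast5 {V : Type*} (G : SimpleGraph V) : Prop :=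
  (∀ a b c : V, G.Adj a b → G.Adj b c → ¬ G.Adj c a) ∧
  (∀ a b c d : V, a ≠ c → b ≠ d →
    G.Adj a b → G.Adj b c → G.Adj c d → ¬ G.Adj d a)

section Helpers
variable {V : Type*} [Fintype V]

private lemma ncard_mono {s t : Set V} (h : s ⊆ t) : s.ncard ≤ t.ncard :=
  Set.ncard_le_ncard h (Set.toFinite t)

private lemma cnt_le_deg (G : SimpleGraph V) (v : V) (P : V → Prop) :
    {w | G.Adj v w ∧ P w}.ncard ≤ degN G v :=
  ncard_mono fun _ hw => hw.1

omit [Fintype V] in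
private lemma deleteVert_adj (G : SimpleGraph V) (v a b : V) :
    (deleteVert G v).Adj a b ↔ G.Adj a b ∧ a ≠ v ∧ b ≠ v := Iff.rfl

private lemma minDeg2 {G : SimpleGraph V} (hG : MinNonColorable34 G) (v : V) :
    2 ≤ degN G v := by
  classical
  by_contra hlt
  push_neg at hlt
  have h01 : degN G v = 0 ∨ degN G v = 1 := by omega
  obtain ⟨c, hc1, hc2⟩ := hG.2.1 v
  rcases h01 with h0 | h1
  · -- degree 0
    have hemp : {w | G.Adj v w} = ∅ := (Set.ncard_eq_zero (Set.toFinite _)).mp h0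
    have hnadj : ∀ w, ¬ G.Adj v w := fun w hw =>
      Set.eq_empty_iff_forall_notMem.mp hemp w hw
    refine hG.1 ⟨c, hc1, fun x => ?_⟩
    have hset : {w | G.Adj x w ∧ c w = c x} = {w | (deleteVert G v).Adj x w ∧ c w = c x} := by
      ext w
      simp only [Set.mem_setOf_eq, deleteVert_adj]
      constructor
      · rintro ⟨ha, hcw⟩
        refine ⟨⟨ha, ?_, ?_⟩, hcw⟩
        · rintro rfl; exact hnadj w ha
        · rintro rfl; exact hnadj x ha.symm
      · rintro ⟨⟨ha, _, _⟩, hcw⟩; exact ⟨ha, hcw⟩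
    rw [hset]; exact hc2 x
  · -- degree 1
    obtain ⟨w0, hw0⟩ := Set.ncard_eq_one.mp h1
    have hvw0 : G.Adj v w0 := by
      have : w0 ∈ {w | G.Adj v w} := by rw [hw0]; rfl
      exact this
    have hnbr : ∀ w, G.Adj v w → w = w0 := by
      intro w hw
      have : w ∈ ({w0} : Set V) := hw0 ▸ hw
      exact this
    have hw0v : w0 ≠ v := fun h => G.loopless.irrefl v (h ▸ hvw0)
    set c' : V → ℕ := fun x => if x = v then 7 - c w0 else c x with hc'def
    have hc'v : c' v = 7 - c w0 := by simp [hc'def]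
    have hc'ne : ∀ x, x ≠ v → c' x = c x := fun x hx => by simp [hc'def, hx]
    have hvals : c w0 = 3 ∨ c w0 = 4 := hc1 w0
    refine hG.1 ⟨c', fun x => ?_, fun x => ?_⟩
    · by_cases hx : x = v
      · subst hx; rw [hc'v]; rcases hvals with h | h <;> rw [h] <;> simp
      · rw [hc'ne x hx]; exact hc1 x
    · by_cases hx : x = v
      · subst hx
        have hempty : {w | G.Adj x w ∧ c' w = c' x} = ∅ := by
          ext w
          simp only [Set.mem_setOf_eq, Set.mem_empty_iff_false, iff_false, not_and]
          intro ha hcw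
          have hw : w = w0 := hnbr w ha
          subst hw
          rw [hc'ne w hw0v, hc'v] at hcw
          rcases hvals with h | h <;> rw [h] at hcw <;> omega
        rw [hempty, Set.ncard_empty]
        omega
      · rw [hc'ne x hx]
        have hsub : {w | G.Adj x w ∧ c' w = c x} ⊆
            {w | (deleteVert G v).Adj x w ∧ c w = c x} := by
          rintro w ⟨ha, hcw⟩
          have hwv : w ≠ v := by
            rintro rfl
            have hx0 : x = w0 := hnbr x ha.symm
            rw [hc'v, hx0] at hcw
            rcases hvals with h | h <;> rw [h] at hcw <;> omega
          rw [hc'ne w hwv] at hcw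
          exact ⟨⟨ha, hx, hwv⟩, hcw⟩
        exact le_trans (ncard_mono hsub) (hc2 x)

private lemma tpn_ne_one {G : SimpleGraph V} {x a b : V} (hab : a ≠ b)
    (ha : G.Adj x a) (hb : G.Adj x b) (hda : 3 ≤ degN G a) (hdb : 3 ≤ degN G b) :
    tpn G x ≠ 1 := by
  have hsub : ({a, b} : Set V) ⊆ {w | G.Adj x w ∧ 3 ≤ degN G w} := by
    rintro w hw
    rcases hw with rfl | hw
    · exact ⟨ha, hda⟩
    · rcases hw with rfl; exact ⟨hb, hdb⟩
  have h2 : 2 ≤ tpn G x := by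
    have := ncard_mono hsub
    rwa [Set.ncard_pair hab] at this
  omega

end Helpers

section Dichotomy
variable {V : Type*} [Fintype V]

omit [Fintype V] in
private lemma delE_adj (G : SimpleGraph V) (p q x y : V) :
    (G.deleteEdges {s(p,q)}).Adj x y ↔
      G.Adj x y ∧ ¬(x = p ∧ y = q) ∧ ¬(x = q ∧ y = p) := by
  rw [SimpleGraph.deleteEdges_adj, Set.mem_singleton_iff, Sym2.eq_iff]
  tauto

private lemma edge_dichotomy {G : SimpleGraph V} (hG : MinNonColorable34 G)
    {p q : V} (hpq : G.Adj p q) :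
    ∃ c : V → ℕ, IsColoring34 (G.deleteEdges {s(p,q)}) c ∧ c p = c q ∧
      ({w | (G.deleteEdges {s(p,q)}).Adj p w ∧ c w = c p}.ncard = c p ∨
       {w | (G.deleteEdges {s(p,q)}).Adj q w ∧ c w = c q}.ncard = c q) := by
  classical
  obtain ⟨c, hc⟩ := hG.2.2 s(p,q) ((SimpleGraph.mem_edgeSet G).mpr hpq)
  refine ⟨c, hc, ?_⟩
  have hne : p ≠ q := hpq.ne
  have hex : ∃ x, c x < {w | G.Adj x w ∧ c w = c x}.ncard := by
    by_contra hco
    push_neg at hco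
    exact hG.1 ⟨c, hc.1, hco⟩
  obtain ⟨x, hx⟩ := hex
  have hGsub : ∀ y : V, {w | (G.deleteEdges {s(p,q)}).Adj y w ∧ c w = c y} ⊆
      {w | G.Adj y w ∧ c w = c y} :=
    fun y w hw => ⟨((delE_adj G p q y w).mp hw.1).1, hw.2⟩
  have hxpq : x = p ∨ x = q := by
    by_contra hxx
    push_neg at hxx
    have heq : {w | G.Adj x w ∧ c w = c x} =
        {w | (G.deleteEdges {s(p,q)}).Adj x w ∧ c w = c x} := by
      ext w
      simp only [Set.mem_setOf_eq]
      constructor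
      · rintro ⟨ha, hcw⟩
        exact ⟨(delE_adj G p q x w).mpr ⟨ha, fun h => hxx.1 h.1, fun h => hxx.2 h.1⟩, hcw⟩
      · rintro ⟨ha, hcw⟩
        exact ⟨((delE_adj G p q x w).mp ha).1, hcw⟩
    rw [heq] at hx
    exact absurd (hc.2 x) (by omega)
  -- key: if x = a for an endpoint a (other endpoint b), then c b = c a and a saturated
  have key : ∀ a b : V, G.Adj a b → a ≠ b →
      (∀ y w : V, (G.deleteEdges {s(p,q)}).Adj y w ↔
        G.Adj y w ∧ ¬(y = a ∧ w = b) ∧ ¬(y = b ∧ w = a)) →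
      c a < {w | G.Adj a w ∧ c w = c a}.ncard →
      c a = c b ∧ {w | (G.deleteEdges {s(p,q)}).Adj a w ∧ c w = c a}.ncard = c a := by
    intro a b hab hnab hadj' hxa
    by_cases hcb : c b = c a
    · have hbnot : b ∉ {w | (G.deleteEdges {s(p,q)}).Adj a w ∧ c w = c a} := by
        rintro ⟨ha', _⟩
        exact ((hadj' a b).mp ha').2.1 ⟨rfl, rfl⟩
      have hset : {w | G.Adj a w ∧ c w = c a} =
          insert b {w | (G.deleteEdges {s(p,q)}).Adj a w ∧ c w = c a} := by
        ext w
        simp only [Set.mem_setOf_eq, Set.mem_insert_iff]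
        constructor
        · rintro ⟨ha', hcw⟩
          by_cases hwb : w = b
          · exact Or.inl hwb
          · exact Or.inr ⟨(hadj' a w).mpr ⟨ha', fun h => hwb h.2, fun h => hnab h.1⟩, hcw⟩
        · rintro (rfl | ⟨ha', hcw⟩)
          · exact ⟨hab, hcb⟩
          · exact ⟨((hadj' a w).mp ha').1, hcw⟩
      rw [hset, Set.ncard_insert_of_notMem hbnot (Set.toFinite _)] at hxa
      have hle : {w | (G.deleteEdges {s(p,q)}).Adj a w ∧ c w = c a}.ncard ≤ c a := hc.2 a
      exact ⟨hcb.symm, by omega⟩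
    · exfalso
      have heq : {w | G.Adj a w ∧ c w = c a} =
          {w | (G.deleteEdges {s(p,q)}).Adj a w ∧ c w = c a} := by
        ext w
        simp only [Set.mem_setOf_eq]
        constructor
        · rintro ⟨ha', hcw⟩
          have hwb : w ≠ b := by rintro rfl; exact hcb hcw
          exact ⟨(hadj' a w).mpr ⟨ha', fun h => hwb h.2, fun h => hnab h.1⟩, hcw⟩
        · rintro ⟨ha', hcw⟩
          exact ⟨((hadj' a w).mp ha').1, hcw⟩
      rw [heq] at hxa
      exact absurd (hc.2 a) (by omega)
  rcases hxpq with rfl | rfl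
  · obtain ⟨h1, h2⟩ := key x q hpq hne (fun y w => delE_adj G x q y w) hx
    exact ⟨h1, Or.inl h2⟩
  · obtain ⟨h1, h2⟩ := key x p hpq.symm (Ne.symm hne)
      (fun y w => by rw [delE_adj G p x y w]; tauto) hx
    exact ⟨h1.symm, Or.inr h2⟩

end Dichotomy

section Main
variable {V : Type*} [Fintype V]

private lemma no_mid {G : SimpleGraph V} (hG : MinNonColorable34 G)
    (hgirth : GirthAtLeast5 G)
    {p q r : V} (hpq : G.Adj p q) (hqr : G.Adj q r) (hpr : p ≠ r)
    (hq5s : Is5s G q) (hp5 : degN G p = 5) (hr5 : degN G r = 5) : False := by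
  classical
  obtain ⟨c, hc, hcpq, hsat⟩ := edge_dichotomy hG hpq
  have hne : p ≠ q := hpq.ne
  have hqnr : q ≠ r := hqr.ne
  have hrp : r ≠ p := Ne.symm hpr
  have hrq : r ≠ q := Ne.symm hqnr
  have hnrp : ¬ G.Adj r p := hgirth.1 p q r hpq hqr
  have hnpr : ¬ G.Adj p r := fun h => hnrp h.symm
  have hadj' : ∀ x y, (G.deleteEdges {s(p,q)}).Adj x y ↔
      G.Adj x y ∧ ¬(x = p ∧ y = q) ∧ ¬(x = q ∧ y = p) := delE_adj G p q
  have hother : ∀ (x : V) (P : V → Prop), x ≠ p → x ≠ q →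
      {w | (G.deleteEdges {s(p,q)}).Adj x w ∧ P w} = {w | G.Adj x w ∧ P w} := by
    intro x P hxp hxq
    ext w
    simp only [Set.mem_setOf_eq, hadj']
    tauto
  have hG'p : ∀ (P : V → Prop),
      {w | (G.deleteEdges {s(p,q)}).Adj p w ∧ P w} = {w | G.Adj p w ∧ w ≠ q ∧ P w} := by
    intro P; ext w
    simp only [Set.mem_setOf_eq, hadj']
    tauto
  have hG'q : ∀ (P : V → Prop),
      {w | (G.deleteEdges {s(p,q)}).Adj q w ∧ P w} = {w | G.Adj q w ∧ w ≠ p ∧ P w} := by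
    intro P; ext w
    simp only [Set.mem_setOf_eq, hadj']
    tauto
  have hc2G : ∀ x, x ≠ p → x ≠ q → {w | G.Adj x w ∧ c w = c x}.ncard ≤ c x := by
    intro x h1 h2; rw [← hother x _ h1 h2]; exact hc.2 x
  have hc2p : {w | G.Adj p w ∧ w ≠ q ∧ c w = c p}.ncard ≤ c p := by
    rw [← hG'p]; exact hc.2 p
  have hc2q : {w | G.Adj q w ∧ w ≠ p ∧ c w = c q}.ncard ≤ c q := by
    rw [← hG'q]; exact hc.2 q
  have hsat' : {w | G.Adj p w ∧ w ≠ q ∧ c w = c p}.ncard = c p ∨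
               {w | G.Adj q w ∧ w ≠ p ∧ c w = c q}.ncard = c q := by
    rcases hsat with h | h
    · left; rw [← hG'p]; exact h
    · right; rw [← hG'q]; exact h
  clear hsat
  have hNcard : ∀ a b : V, G.Adj a b → degN G a = 5 →
      {w | G.Adj a w ∧ w ≠ b}.ncard = 4 := by
    intro a b hab hd
    have hdiff : {w | G.Adj a w ∧ w ≠ b} = {w | G.Adj a w} \ {b} := by
      ext w
      simp only [Set.mem_setOf_eq, Set.mem_diff, Set.mem_singleton_iff]
    have hmem : b ∈ {w | G.Adj a w} := hab
    have h5 : ({w | G.Adj a w} : Set V).ncard = 5 := hd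
    rw [hdiff, Set.ncard_diff_singleton_of_mem hmem, h5]
  have hNqp : {w | G.Adj q w ∧ w ≠ p}.ncard = 4 := hNcard q p hpq.symm hq5s.1
  have hNpq : {w | G.Adj p w ∧ w ≠ q}.ncard = 4 := hNcard p q hpq hp5
  have hNrq : {w | G.Adj r w ∧ w ≠ q}.ncard = 4 := hNcard r q hqr.symm hr5
  have hqsmall : ∀ w, G.Adj q w → w ≠ p → w ≠ r → degN G w ≤ 2 := by
    have hpairsub : ({p, r} : Set V) ⊆ {w | G.Adj q w ∧ 3 ≤ degN G w} := by
      intro w hw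
      simp only [Set.mem_insert_iff, Set.mem_singleton_iff] at hw
      rcases hw with rfl | rfl
      · exact ⟨hpq.symm, by rw [hp5]; norm_num⟩
      · exact ⟨hqr, by rw [hr5]; norm_num⟩
    have heq := Set.eq_of_subset_of_ncard_le hpairsub
      (by rw [Set.ncard_pair hpr]; exact le_of_eq hq5s.2) (Set.toFinite _)
    intro w ha hwp hwr
    by_contra hgt
    push_neg at hgt
    have hmem : w ∈ {w | G.Adj q w ∧ 3 ≤ degN G w} := ⟨ha, by omega⟩
    rw [← heq] at hmem
    simp only [Set.mem_insert_iff, Set.mem_singleton_iff] at hmem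
    rcases hmem with rfl | rfl
    · exact hwp rfl
    · exact hwr rfl
  rcases hc.1 q with hq3 | hq4
  · -- CASE c q = 3
    have hp3 : c p = 3 := hcpq.trans hq3
    by_cases hrsat : c r = 4 ∧ {w | G.Adj r w ∧ c w = 4}.ncard = 4
    · -- M2 : also recolor r
      obtain ⟨hr4, hrs⟩ := hrsat
      have hrall : ∀ w, G.Adj r w → w ≠ q → c w = 4 := by
        have hsub : {w | G.Adj r w ∧ c w = 4} ⊆ {w | G.Adj r w ∧ w ≠ q} := by
          rintro w ⟨ha, h4⟩
          exact ⟨ha, by rintro rfl; rw [hq3] at h4; omega⟩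
        have heq := Set.eq_of_subset_of_ncard_le hsub
          (by rw [hNrq, hrs]) (Set.toFinite _)
        intro w ha hwq
        have hmem : w ∈ {w | G.Adj r w ∧ w ≠ q} := ⟨ha, hwq⟩
        rw [← heq] at hmem
        exact hmem.2
      set c' : V → ℕ := fun x => if x = q then 4 else if x = r then 3 else c x with hc'def
      have hc'q : c' q = 4 := by simp [hc'def]
      have hc'r : c' r = 3 := by simp [hc'def, hrq]
      have hc'o : ∀ x, x ≠ q → x ≠ r → c' x = c x := fun x h1 h2 => by
        simp [hc'def, h1, h2]
      have hc'p : c' p = 3 := by rw [hc'o p hne hpr]; exact hp3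
      have hvals' : ∀ x, c' x = 3 ∨ c' x = 4 := by
        intro x
        by_cases h1 : x = q
        · subst h1; exact Or.inr hc'q
        by_cases h2 : x = r
        · subst h2; exact Or.inl hc'r
        · rw [hc'o x h1 h2]; exact hc.1 x
      refine hG.1 ⟨c', hvals', fun v => ?_⟩
      by_cases hvq : v = q
      · rw [hvq, hc'q]
        have hsub : {w | G.Adj q w ∧ c' w = 4} ⊆ {w | G.Adj q w ∧ w ≠ p} := by
          rintro w ⟨ha, h4⟩
          refine ⟨ha, ?_⟩
          rintro rfl
          rw [hc'p] at h4
          omega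
        exact le_trans (ncard_mono hsub) (le_of_eq hNqp)
      by_cases hvr : v = r
      · rw [hvr, hc'r]
        have hemp : {w | G.Adj r w ∧ c' w = 3} = ∅ := by
          ext w
          simp only [Set.mem_setOf_eq, Set.mem_empty_iff_false, iff_false, not_and]
          intro ha h3
          by_cases hwq : w = q
          · subst hwq; rw [hc'q] at h3; omega
          · have hwr' : w ≠ r := (G.ne_of_adj ha).symm
            have := hrall w ha hwq
            rw [hc'o w hwq hwr'] at h3
            omega
        rw [hemp, Set.ncard_empty]
        omega
      by_cases hvp : v = p
      · rw [hvp, hc'p]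
        have hsub : {w | G.Adj p w ∧ c' w = 3} ⊆
            {w | G.Adj p w ∧ w ≠ q ∧ c w = c p} := by
          rintro w ⟨ha, h3⟩
          have hwq : w ≠ q := by rintro rfl; rw [hc'q] at h3; omega
          have hwr : w ≠ r := by rintro rfl; exact hnpr ha
          rw [hc'o w hwq hwr] at h3
          exact ⟨ha, hwq, by rw [h3, hp3]⟩
        exact le_trans (le_trans (ncard_mono hsub) hc2p) (le_of_eq hp3)
      by_cases hadjqv : G.Adj q v
      · have hd2 : degN G v ≤ 2 := hqsmall v hadjqv hvp hvr
        have h3le : 3 ≤ c' v := by rcases hvals' v with h | h <;> omega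
        exact le_trans (cnt_le_deg G v _) (by omega)
      by_cases hadjrv : G.Adj r v
      · have hcv : c v = 4 := hrall v hadjrv hvq
        rw [hc'o v hvq hvr, hcv]
        have hsub : {w | G.Adj v w ∧ c' w = 4} ⊆ {w | G.Adj v w ∧ c w = c v} := by
          rintro w ⟨ha, h4⟩
          have hwq : w ≠ q := by rintro rfl; exact hadjqv ha.symm
          have hwr : w ≠ r := by rintro rfl; rw [hc'r] at h4; omega
          rw [hc'o w hwq hwr] at h4
          exact ⟨ha, by rw [h4, hcv]⟩
        exact le_trans (ncard_mono hsub) (le_trans (hc2G v hvp hvq) (le_of_eq hcv))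
      · rw [hc'o v hvq hvr]
        have hsub : {w | G.Adj v w ∧ c' w = c v} ⊆ {w | G.Adj v w ∧ c w = c v} := by
          rintro w ⟨ha, hw⟩
          have hwq : w ≠ q := by rintro rfl; exact hadjqv ha.symm
          have hwr : w ≠ r := by rintro rfl; exact hadjrv ha.symm
          rw [hc'o w hwq hwr] at hw
          exact ⟨ha, hw⟩
        exact le_trans (ncard_mono hsub) (hc2G v hvp hvq)
    · -- M1 : recolor only q
      set c' : V → ℕ := fun x => if x = q then 4 else c x with hc'def
      have hc'q : c' q = 4 := by simp [hc'def]
      have hc'o : ∀ x, x ≠ q → c' x = c x := fun x h1 => by simp [hc'def, h1]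
      have hc'p : c' p = 3 := by rw [hc'o p hne]; exact hp3
      have hvals' : ∀ x, c' x = 3 ∨ c' x = 4 := by
        intro x
        by_cases h1 : x = q
        · subst h1; exact Or.inr hc'q
        · rw [hc'o x h1]; exact hc.1 x
      refine hG.1 ⟨c', hvals', fun v => ?_⟩
      by_cases hvq : v = q
      · rw [hvq, hc'q]
        have hsub : {w | G.Adj q w ∧ c' w = 4} ⊆ {w | G.Adj q w ∧ w ≠ p} := by
          rintro w ⟨ha, h4⟩
          refine ⟨ha, ?_⟩
          rintro rfl
          rw [hc'p] at h4
          omega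
        exact le_trans (ncard_mono hsub) (le_of_eq hNqp)
      by_cases hvp : v = p
      · rw [hvp, hc'p]
        have hsub : {w | G.Adj p w ∧ c' w = 3} ⊆
            {w | G.Adj p w ∧ w ≠ q ∧ c w = c p} := by
          rintro w ⟨ha, h3⟩
          have hwq : w ≠ q := by rintro rfl; rw [hc'q] at h3; omega
          rw [hc'o w hwq] at h3
          exact ⟨ha, hwq, by rw [h3, hp3]⟩
        exact le_trans (le_trans (ncard_mono hsub) hc2p) (le_of_eq hp3)
      by_cases hvr : v = r
      · rw [hvr, hc'o r hrq]
        rcases hc.1 r with h3 | h4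
        · have hsub : {w | G.Adj r w ∧ c' w = c r} ⊆ {w | G.Adj r w ∧ c w = c r} := by
            rintro w ⟨ha, hw⟩
            have hwq : w ≠ q := by rintro rfl; rw [hc'q, h3] at hw; omega
            rw [hc'o w hwq] at hw
            exact ⟨ha, hw⟩
          exact le_trans (ncard_mono hsub) (hc2G r hrp hrq)
        · have hlt : {w | G.Adj r w ∧ c w = 4}.ncard ≠ 4 := fun hh => hrsat ⟨h4, hh⟩
          have hle4 : {w | G.Adj r w ∧ c w = 4}.ncard ≤ 4 := by
            have := hc2G r hrp hrq
            rw [h4] at this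
            exact this
          have hsub : {w | G.Adj r w ∧ c' w = 4} ⊆
              insert q {w | G.Adj r w ∧ c w = 4} := by
            rintro w ⟨ha, hw⟩
            by_cases hwq : w = q
            · exact Set.mem_insert_iff.mpr (Or.inl hwq)
            · rw [hc'o w hwq] at hw
              exact Set.mem_insert_iff.mpr (Or.inr ⟨ha, hw⟩)
          have hstep : ({w | G.Adj r w ∧ c w = 4}).ncard + 1 ≤ 4 := by omega
          rw [h4]
          exact le_trans (ncard_mono hsub) (le_trans (Set.ncard_insert_le _ _) hstep)
      by_cases hadjqv : G.Adj q v
      · have hd2 : degN G v ≤ 2 := hqsmall v hadjqv hvp hvr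
        have h3le : 3 ≤ c' v := by rcases hvals' v with h | h <;> omega
        exact le_trans (cnt_le_deg G v _) (by omega)
      · rw [hc'o v hvq]
        have hsub : {w | G.Adj v w ∧ c' w = c v} ⊆ {w | G.Adj v w ∧ c w = c v} := by
          rintro w ⟨ha, hw⟩
          have hwq : w ≠ q := by rintro rfl; exact hadjqv ha.symm
          rw [hc'o w hwq] at hw
          exact ⟨ha, hw⟩
        exact le_trans (ncard_mono hsub) (hc2G v hvp hvq)
  · -- CASE c q = 4
    have hp4 : c p = 4 := hcpq.trans hq4
    rcases hsat' with hsp | hsq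
    · -- p is saturated : recolor p to 3
      have hpall : ∀ w, G.Adj p w → w ≠ q → c w = 4 := by
        have hsub : {w | G.Adj p w ∧ w ≠ q ∧ c w = c p} ⊆ {w | G.Adj p w ∧ w ≠ q} :=
          fun w hw => ⟨hw.1, hw.2.1⟩
        have heq := Set.eq_of_subset_of_ncard_le hsub
          (by rw [hNpq, hsp, hp4]) (Set.toFinite _)
        intro w ha hwq
        have hmem : w ∈ {w | G.Adj p w ∧ w ≠ q} := ⟨ha, hwq⟩
        rw [← heq] at hmem
        exact hmem.2.2.trans hp4
      set c' : V → ℕ := fun x => if x = p then 3 else c x with hc'def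
      have hc'p : c' p = 3 := by simp [hc'def]
      have hc'o : ∀ x, x ≠ p → c' x = c x := fun x h1 => by simp [hc'def, h1]
      have hc'q : c' q = 4 := by rw [hc'o q (Ne.symm hne)]; exact hq4
      have hvals' : ∀ x, c' x = 3 ∨ c' x = 4 := by
        intro x
        by_cases h1 : x = p
        · subst h1; exact Or.inl hc'p
        · rw [hc'o x h1]; exact hc.1 x
      refine hG.1 ⟨c', hvals', fun v => ?_⟩
      by_cases hvp : v = p
      · rw [hvp, hc'p]
        have hemp : {w | G.Adj p w ∧ c' w = 3} = ∅ := by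
          ext w
          simp only [Set.mem_setOf_eq, Set.mem_empty_iff_false, iff_false, not_and]
          intro ha h3
          by_cases hwq : w = q
          · subst hwq; rw [hc'q] at h3; omega
          · have hwp' : w ≠ p := (G.ne_of_adj ha).symm
            have := hpall w ha hwq
            rw [hc'o w hwp'] at h3
            omega
        rw [hemp, Set.ncard_empty]
        omega
      by_cases hvq : v = q
      · rw [hvq, hc'q]
        have hsub : {w | G.Adj q w ∧ c' w = 4} ⊆
            {w | G.Adj q w ∧ w ≠ p ∧ c w = c q} := by
          rintro w ⟨ha, h4⟩
          have hwp : w ≠ p := by rintro rfl; rw [hc'p] at h4; omega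
          rw [hc'o w hwp] at h4
          exact ⟨ha, hwp, by rw [h4, hq4]⟩
        exact le_trans (le_trans (ncard_mono hsub) hc2q) (le_of_eq hq4)
      by_cases hadjpv : G.Adj p v
      · have hcv : c v = 4 := hpall v hadjpv hvq
        rw [hc'o v hvp, hcv]
        have hsub : {w | G.Adj v w ∧ c' w = 4} ⊆ {w | G.Adj v w ∧ c w = c v} := by
          rintro w ⟨ha, h4⟩
          have hwp : w ≠ p := by rintro rfl; rw [hc'p] at h4; omega
          rw [hc'o w hwp] at h4
          exact ⟨ha, by rw [h4, hcv]⟩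
        exact le_trans (ncard_mono hsub) (le_trans (hc2G v hvp hvq) (le_of_eq hcv))
      · rw [hc'o v hvp]
        have hsub : {w | G.Adj v w ∧ c' w = c v} ⊆ {w | G.Adj v w ∧ c w = c v} := by
          rintro w ⟨ha, hw⟩
          have hwp : w ≠ p := by rintro rfl; exact hadjpv ha.symm
          rw [hc'o w hwp] at hw
          exact ⟨ha, hw⟩
        exact le_trans (ncard_mono hsub) (hc2G v hvp hvq)
    · -- q is saturated : recolor q to 3
      have hqall : ∀ w, G.Adj q w → w ≠ p → c w = 4 := by
        have hsub : {w | G.Adj q w ∧ w ≠ p ∧ c w = c q} ⊆ {w | G.Adj q w ∧ w ≠ p} :=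
          fun w hw => ⟨hw.1, hw.2.1⟩
        have heq := Set.eq_of_subset_of_ncard_le hsub
          (by rw [hNqp, hsq, hq4]) (Set.toFinite _)
        intro w ha hwp
        have hmem : w ∈ {w | G.Adj q w ∧ w ≠ p} := ⟨ha, hwp⟩
        rw [← heq] at hmem
        exact hmem.2.2.trans hq4
      set c' : V → ℕ := fun x => if x = q then 3 else c x with hc'def
      have hc'q : c' q = 3 := by simp [hc'def]
      have hc'o : ∀ x, x ≠ q → c' x = c x := fun x h1 => by simp [hc'def, h1]
      have hc'p : c' p = 4 := by rw [hc'o p hne]; exact hp4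
      have hvals' : ∀ x, c' x = 3 ∨ c' x = 4 := by
        intro x
        by_cases h1 : x = q
        · subst h1; exact Or.inl hc'q
        · rw [hc'o x h1]; exact hc.1 x
      refine hG.1 ⟨c', hvals', fun v => ?_⟩
      by_cases hvq : v = q
      · rw [hvq, hc'q]
        have hemp : {w | G.Adj q w ∧ c' w = 3} = ∅ := by
          ext w
          simp only [Set.mem_setOf_eq, Set.mem_empty_iff_false, iff_false, not_and]
          intro ha h3
          by_cases hwp : w = p
          · subst hwp; rw [hc'p] at h3; omega
          · have hwq' : w ≠ q := (G.ne_of_adj ha).symm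
            have := hqall w ha hwp
            rw [hc'o w hwq'] at h3
            omega
        rw [hemp, Set.ncard_empty]
        omega
      by_cases hvp : v = p
      · rw [hvp, hc'p]
        have hsub : {w | G.Adj p w ∧ c' w = 4} ⊆
            {w | G.Adj p w ∧ w ≠ q ∧ c w = c p} := by
          rintro w ⟨ha, h4⟩
          have hwq : w ≠ q := by rintro rfl; rw [hc'q] at h4; omega
          rw [hc'o w hwq] at h4
          exact ⟨ha, hwq, by rw [h4, hp4]⟩
        exact le_trans (le_trans (ncard_mono hsub) hc2p) (le_of_eq hp4)
      by_cases hadjqv : G.Adj q v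
      · have hcv : c v = 4 := hqall v hadjqv hvp
        rw [hc'o v hvq, hcv]
        have hsub : {w | G.Adj v w ∧ c' w = 4} ⊆ {w | G.Adj v w ∧ c w = c v} := by
          rintro w ⟨ha, h4⟩
          have hwq : w ≠ q := by rintro rfl; rw [hc'q] at h4; omega
          rw [hc'o w hwq] at h4
          exact ⟨ha, by rw [h4, hcv]⟩
        exact le_trans (ncard_mono hsub) (le_trans (hc2G v hvp hvq) (le_of_eq hcv))
      · rw [hc'o v hvq]
        have hsub : {w | G.Adj v w ∧ c' w = c v} ⊆ {w | G.Adj v w ∧ c w = c v} := by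
          rintro w ⟨ha, hw⟩
          have hwq : w ≠ q := by rintro rfl; exact hadjqv ha.symm
          rw [hc'o w hwq] at hw
          exact ⟨ha, hw⟩
        exact le_trans (ncard_mono hsub) (hc2G v hvp hvq)

end Main

/-- In a minimally non-(3,4)-colorable graph of girth at least 5, if
no vertex of a 6-cycle has degree 2, then no vertex of the cycle has exactly one
3^+-neighbor, and at most four of its vertices are 5s-vertices. -/
theorem stmt_16 {V : Type*} [Fintype V] (G : SimpleGraph V)
    (hG : MinNonColorable34 G) (hgirth : GirthAtLeast5 G)
    (u1 u2 u3 u4 u5 u6 : V)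
    (hnd : ([u1, u2, u3, u4, u5, u6] : List V).Nodup)
    (a12 : G.Adj u1 u2) (a23 : G.Adj u2 u3) (a34 : G.Adj u3 u4)
    (a45 : G.Adj u4 u5) (a56 : G.Adj u5 u6) (a61 : G.Adj u6 u1)
    (h2 : ∀ x ∈ ({u1, u2, u3, u4, u5, u6} : Set V), degN G x ≠ 2) :
    (∀ x ∈ ({u1, u2, u3, u4, u5, u6} : Set V), tpn G x ≠ 1) ∧
      {x ∈ ({u1, u2, u3, u4, u5, u6} : Set V) | Is5s G x}.ncard ≤ 4 := by
  classical
  simp only [List.nodup_cons, List.mem_cons, List.not_mem_nil, or_false, List.nodup_nil,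
    and_true, not_or] at hnd
  obtain ⟨⟨h12, h13, h14, h15, h16⟩, ⟨h23, h24, h25, h26⟩, ⟨h34, h35, h36⟩, ⟨h45, h46⟩, h56⟩ := hnd
  have hdeg : ∀ x ∈ ({u1, u2, u3, u4, u5, u6} : Set V), 3 ≤ degN G x := by
    intro x hx
    have ha := minDeg2 hG x
    have hb := h2 x hx
    omega
  have hd1 : 3 ≤ degN G u1 := hdeg u1 (by simp)
  have hd2 : 3 ≤ degN G u2 := hdeg u2 (by simp)
  have hd3 : 3 ≤ degN G u3 := hdeg u3 (by simp)
  have hd4 : 3 ≤ degN G u4 := hdeg u4 (by simp)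
  have hd5 : 3 ≤ degN G u5 := hdeg u5 (by simp)
  have hd6 : 3 ≤ degN G u6 := hdeg u6 (by simp)
  constructor
  · intro x hx
    simp only [Set.mem_insert_iff, Set.mem_singleton_iff] at hx
    rcases hx with rfl | rfl | rfl | rfl | rfl | rfl
    · exact tpn_ne_one h26 a12 a61.symm hd2 hd6
    · exact tpn_ne_one h13 a12.symm a23 hd1 hd3
    · exact tpn_ne_one h24 a23.symm a34 hd2 hd4
    · exact tpn_ne_one h35 a34.symm a45 hd3 hd5
    · exact tpn_ne_one h46 a45.symm a56 hd4 hd6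
    · exact tpn_ne_one (Ne.symm h15) a56.symm a61 hd5 hd1
  · have t1 : ¬(Is5s G u1 ∧ Is5s G u2 ∧ Is5s G u3) := by
      rintro ⟨hh1, hh2, hh3⟩
      exact no_mid hG hgirth a12 a23 h13 hh2 hh1.1 hh3.1
    have t2 : ¬(Is5s G u4 ∧ Is5s G u5 ∧ Is5s G u6) := by
      rintro ⟨hh4, hh5, hh6⟩
      exact no_mid hG hgirth a45 a56 h46 hh5 hh4.1 hh6.1
    have hx : ∃ x, (x = u1 ∨ x = u2 ∨ x = u3) ∧ ¬ Is5s G x := by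
      by_contra h
      push_neg at h
      exact t1 ⟨h u1 (Or.inl rfl), h u2 (Or.inr (Or.inl rfl)), h u3 (Or.inr (Or.inr rfl))⟩
    have hy : ∃ y, (y = u4 ∨ y = u5 ∨ y = u6) ∧ ¬ Is5s G y := by
      by_contra h
      push_neg at h
      exact t2 ⟨h u4 (Or.inl rfl), h u5 (Or.inr (Or.inl rfl)), h u6 (Or.inr (Or.inr rfl))⟩
    obtain ⟨x, hxm, hxn⟩ := hx
    obtain ⟨y, hym, hyn⟩ := hy
    have hxy : x ≠ y := by
      rcases hxm with rfl | rfl | rfl <;> rcases hym with rfl | rfl | rfl <;>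
        first
          | exact h14 | exact h15 | exact h16 | exact h24 | exact h25 | exact h26
          | exact h34 | exact h35 | exact h36
    have hxmem : x ∈ ({u1, u2, u3, u4, u5, u6} : Set V) := by
      rcases hxm with rfl | rfl | rfl <;> simp
    have hymem : y ∈ ({u1, u2, u3, u4, u5, u6} : Set V) := by
      rcases hym with rfl | rfl | rfl <;> simp
    have hsub : {z ∈ ({u1, u2, u3, u4, u5, u6} : Set V) | Is5s G z} ⊆
        ({u1, u2, u3, u4, u5, u6} : Set V) \ {x, y} := by
      rintro z ⟨hz6, hz5⟩
      refine ⟨hz6, ?_⟩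
      simp only [Set.mem_insert_iff, Set.mem_singleton_iff]
      push_neg
      exact ⟨fun h => hxn (h ▸ hz5), fun h => hyn (h ▸ hz5)⟩
    have h6 : ({u1, u2, u3, u4, u5, u6} : Set V).ncard = 6 := by
      rw [Set.ncard_insert_of_notMem (by
        simp only [Set.mem_insert_iff, Set.mem_singleton_iff]; push_neg
        exact ⟨h12, h13, h14, h15, h16⟩) (Set.toFinite _)]
      rw [Set.ncard_insert_of_notMem (by
        simp only [Set.mem_insert_iff, Set.mem_singleton_iff]; push_neg
        exact ⟨h23, h24, h25, h26⟩) (Set.toFinite _)]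
      rw [Set.ncard_insert_of_notMem (by
        simp only [Set.mem_insert_iff, Set.mem_singleton_iff]; push_neg
        exact ⟨h34, h35, h36⟩) (Set.toFinite _)]
      rw [Set.ncard_insert_of_notMem (by
        simp only [Set.mem_insert_iff, Set.mem_singleton_iff]; push_neg
        exact ⟨h45, h46⟩) (Set.toFinite _)]
      rw [Set.ncard_insert_of_notMem (by
        simp only [Set.mem_singleton_iff]; exact h56.1) (Set.toFinite _)]
      rw [Set.ncard_singleton]
    have hpair : ({x, y} : Set V) ⊆ ({u1, u2, u3, u4, u5, u6} : Set V) := by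
      intro z hz
      simp only [Set.mem_insert_iff, Set.mem_singleton_iff] at hz
      rcases hz with rfl | rfl
      · exact hxmem
      · exact hymem
    have hdiffcard : (({u1, u2, u3, u4, u5, u6} : Set V) \ {x, y}).ncard = 4 := by
      rw [Set.ncard_diff hpair (Set.toFinite _), h6, Set.ncard_pair hxy]
    calc {z ∈ ({u1, u2, u3, u4, u5, u6} : Set V) | Is5s G z}.ncard
        ≤ (({u1, u2, u3, u4, u5, u6} : Set V) \ {x, y}).ncard := ncard_mono hsub
      _ = 4 := hdiffcard
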